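/- Let G be a graph on n vertices with matching number ν(G) ≤ k. Then e(G) ≤ max{ C(2k+1, 2), C(n,2) − C(n−k, 2) }. -/

import Mathlib

namespace EG

def pdisj (e f : ℕ × ℕ) : Prop := e.1 ≠ f.1 ∧ e.1 ≠ f.2 ∧ e.2 ≠ f.1 ∧ e.2 ≠ f.2
def IsM (M : Finset (ℕ × ℕ)) : Prop := ∀ e ∈ M, ∀ f ∈ M, e ≠ f → pdisj e f
def nuLe (E : Finset (ℕ × ℕ)) (k : ℕ) : Prop := ∀ M ⊆ E, IsM M → M.card ≤ k
def bnd (E : Finset (ℕ × ℕ)) (n : ℕ) : Prop := ∀ e ∈ E, e.1 < e.2 ∧ e.2 < n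
def shifted (E : Finset (ℕ × ℕ)) : Prop :=
  ∀ e ∈ E, ∀ a b : ℕ, a < b → a ≤ e.1 → b ≤ e.2 → (a, b) ∈ E

def vmem (v : ℕ) (e : ℕ × ℕ) : Prop := e.1 = v ∨ e.2 = v

instance (v : ℕ) (e : ℕ × ℕ) : Decidable (vmem v e) := by unfold vmem; infer_instance

lemma pdisj_iff {e f : ℕ × ℕ} : pdisj e f ↔ ∀ v, vmem v e → ¬ vmem v f := by
  constructor
  · rintro ⟨h1,h2,h3,h4⟩ v hv hv'
    unfold vmem at hv hv'; omega
  · intro h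
    refine ⟨?_,?_,?_,?_⟩ <;> intro hh
    · exact h e.1 (Or.inl rfl) (Or.inl hh.symm)
    · exact h e.1 (Or.inl rfl) (Or.inr hh.symm)
    · exact h e.2 (Or.inr rfl) (Or.inl hh.symm)
    · exact h e.2 (Or.inr rfl) (Or.inr hh.symm)

lemma eq_of_vmem {e f : ℕ × ℕ} (he : e.1 < e.2) (hf : f.1 < f.2)
    (h : ∀ v, vmem v e ↔ vmem v f) : e = f := by
  have h1 := h e.1
  have h2 := h e.2
  have h3 := h f.1
  have h4 := h f.2
  unfold vmem at h1 h2 h3 h4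
  have : e.1 = f.1 ∧ e.2 = f.2 := by omega
  exact Prod.ext this.1 this.2

def repl (i j : ℕ) (e : ℕ × ℕ) : ℕ × ℕ :=
  if e.1 = j then (i, e.2) else if e.1 < i then (e.1, i) else (i, e.1)

def canshift (E : Finset (ℕ × ℕ)) (i j : ℕ) (e : ℕ × ℕ) : Prop :=
  (e.1 = j ∨ e.2 = j) ∧ e.1 ≠ i ∧ e.2 ≠ i ∧ repl i j e ∉ E

instance (E : Finset (ℕ × ℕ)) (i j : ℕ) (e : ℕ × ℕ) : Decidable (canshift E i j e) := by
  unfold canshift; infer_instance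

def shiftF (E : Finset (ℕ × ℕ)) (i j : ℕ) (e : ℕ × ℕ) : ℕ × ℕ :=
  if canshift E i j e then repl i j e else e

def S (E : Finset (ℕ × ℕ)) (i j : ℕ) : Finset (ℕ × ℕ) := E.image (shiftF E i j)

-- properties of repl under the shiftable conditions
lemma repl_vmem {i j : ℕ} {e : ℕ × ℕ} (he : e.1 < e.2) (hij : i < j)
    (hj : vmem j e) (hi : ¬ vmem i e) :
    vmem i (repl i j e) ∧ ¬ vmem j (repl i j e) ∧
    (∀ v, v ≠ i → v ≠ j → (vmem v (repl i j e) ↔ vmem v e)) ∧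
    (repl i j e).1 < (repl i j e).2 ∧ (repl i j e).1 + (repl i j e).2 < e.1 + e.2 := by
  unfold vmem at *
  unfold repl
  split
  · dsimp only
    exact ⟨by omega, by omega, fun v hvi hvj => by omega, by omega, by omega⟩
  · split <;> dsimp only <;>
      exact ⟨by omega, by omega, fun v hvi hvj => by omega, by omega, by omega⟩

lemma repl_has_i (i j : ℕ) (e : ℕ × ℕ) : vmem i (repl i j e) := by
  unfold vmem repl
  split
  · dsimp only; omega
  · split <;> dsimp only <;> omega

lemma sorted_S {E : Finset (ℕ × ℕ)} {i j : ℕ} (hE : ∀ e ∈ E, e.1 < e.2) (hij : i < j) :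
    ∀ f ∈ S E i j, f.1 < f.2 := by
  intro f hf
  obtain ⟨e, he, rfl⟩ := Finset.mem_image.mp hf
  unfold shiftF
  split
  · next hc =>
    obtain ⟨h1, h2, h3, h4⟩ := hc
    exact (repl_vmem (hE e he) hij h1 (by unfold vmem; omega)).2.2.2.1
  · exact hE e he

lemma H1 {E : Finset (ℕ × ℕ)} {i j : ℕ} {f : ℕ × ℕ} (hf : f ∈ S E i j)
    (hfi : ¬ vmem i f) : f ∈ E := by
  obtain ⟨e, he, rfl⟩ := Finset.mem_image.mp hf
  by_cases hc : canshift E i j e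
  · rw [shiftF, if_pos hc] at hfi
    exact absurd (repl_has_i i j e) hfi
  · rw [shiftF, if_neg hc]
    exact he

lemma H2 {E : Finset (ℕ × ℕ)} {i j : ℕ} {f : ℕ × ℕ} (hE : ∀ e ∈ E, e.1 < e.2)
    (hij : i < j) (hf : f ∈ S E i j) (hfj : vmem j f) :
    f ∈ E ∧ (vmem i f ∨ repl i j f ∈ E) := by
  obtain ⟨e, he, rfl⟩ := Finset.mem_image.mp hf
  by_cases hc : canshift E i j e
  · rw [shiftF, if_pos hc] at hfj
    obtain ⟨h1, h2, h3, h4⟩ := hc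
    exact absurd hfj (repl_vmem (hE e he) hij h1 (by unfold vmem; omega)).2.1
  · rw [shiftF, if_neg hc]
    rw [shiftF, if_neg hc] at hfj
    refine ⟨he, ?_⟩
    unfold canshift at hc
    push_neg at hc
    by_cases hvi : vmem i e
    · exact Or.inl hvi
    · unfold vmem at hfj hvi
      right
      exact hc hfj (by omega) (by omega)

lemma H3 {E : Finset (ℕ × ℕ)} {i j : ℕ} {f : ℕ × ℕ} (hf : f ∈ S E i j)
    (hfE : f ∉ E) : ∃ e ∈ E, canshift E i j e ∧ repl i j e = f := by
  obtain ⟨e, he, rfl⟩ := Finset.mem_image.mp hf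
  by_cases hc : canshift E i j e
  · exact ⟨e, he, hc, (by rw [shiftF, if_pos hc])⟩
  · rw [shiftF, if_neg hc] at hfE
    exact absurd he hfE

lemma injOn_shiftF {E : Finset (ℕ × ℕ)} {i j : ℕ} (hE : ∀ e ∈ E, e.1 < e.2)
    (hij : i < j) : Set.InjOn (shiftF E i j) E := by
  intro e he e' he' h
  simp only [Finset.mem_coe] at he he'
  unfold shiftF at h
  split at h <;> split at h
  · next hc hc' =>
    obtain ⟨h1, h2, h3, h4⟩ := hc
    obtain ⟨h1', h2', h3', h4'⟩ := hc'
    have P := repl_vmem (hE e he) hij h1 (by unfold vmem; omega)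
    have P' := repl_vmem (hE e' he') hij h1' (by unfold vmem; omega)
    refine eq_of_vmem (hE e he) (hE e' he') (fun v => ?_)
    by_cases hvi : v = i
    · subst hvi; unfold vmem at *; constructor <;> intro <;> omega
    by_cases hvj : v = j
    · subst hvj; unfold vmem at *; constructor <;> intro <;> omega
    · rw [← P.2.2.1 v hvi hvj, h, P'.2.2.1 v hvi hvj]
  · next hc hc' => exact absurd (h ▸ he') hc.2.2.2
  · next hc hc' => exact absurd (h ▸ he) hc'.2.2.2
  · exact h

lemma card_S {E : Finset (ℕ × ℕ)} {i j : ℕ} (hE : ∀ e ∈ E, e.1 < e.2)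
    (hij : i < j) : (S E i j).card = E.card :=
  Finset.card_image_of_injOn (injOn_shiftF hE hij)

lemma bnd_S {E : Finset (ℕ × ℕ)} {i j n : ℕ} (hE : bnd E n) (hij : i < j) :
    bnd (S E i j) n := by
  intro f hf
  have hs : f.1 < f.2 := sorted_S (fun e he => (hE e he).1) hij f hf
  refine ⟨hs, ?_⟩
  obtain ⟨e, he, rfl⟩ := Finset.mem_image.mp hf
  revert hs
  unfold shiftF
  split
  · next hc =>
    obtain ⟨h1, h2, h3, h4⟩ := hc
    intro hs
    have P := repl_vmem (hE e he).1 hij h1 (by unfold vmem; omega)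
    have hjn : j < n := by
      have := (hE e he).1
      have := (hE e he).2
      omega
    have hv2 : vmem (repl i j e).2 (repl i j e) := Or.inr rfl
    by_cases hv2i : (repl i j e).2 = i
    · omega
    by_cases hv2j : (repl i j e).2 = j
    · exact absurd (Or.inr hv2j) P.2.1
    · have := (P.2.2.1 _ hv2i hv2j).mp hv2
      unfold vmem at this
      have := (hE e he).1
      have := (hE e he).2
      omega
  · intro _; exact (hE e he).2

def phi (E : Finset (ℕ × ℕ)) : ℕ := ∑ e ∈ E, (e.1 + e.2)

lemma phi_S {E : Finset (ℕ × ℕ)} {i j : ℕ} {e₀ : ℕ × ℕ} (hE : ∀ e ∈ E, e.1 < e.2)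
    (hij : i < j) (he₀ : e₀ ∈ E) (hc₀ : canshift E i j e₀) :
    phi (S E i j) < phi E := by
  unfold phi S
  rw [Finset.sum_image (fun x hx y hy h => injOn_shiftF hE hij hx hy h)]
  refine Finset.sum_lt_sum (fun e he => ?_) ⟨e₀, he₀, ?_⟩
  · unfold shiftF
    split
    · next hc =>
      obtain ⟨h1, h2, h3, h4⟩ := hc
      exact le_of_lt (repl_vmem (hE e he) hij h1 (by unfold vmem; omega)).2.2.2.2
    · exact le_rfl
  · unfold shiftF
    rw [if_pos hc₀]
    obtain ⟨h1, h2, h3, h4⟩ := hc₀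
    exact (repl_vmem (hE e₀ he₀) hij h1 (by unfold vmem; omega)).2.2.2.2

lemma nuLe_S {E : Finset (ℕ × ℕ)} {i j k : ℕ} (hE : ∀ e ∈ E, e.1 < e.2)
    (hij : i < j) (hnu : nuLe E k) : nuLe (S E i j) k := by
  classical
  intro M hM hIsM
  have hM' : ∀ e ∈ M, ∀ f ∈ M, e ≠ f → ∀ v, vmem v e → ¬ vmem v f :=
    fun e he f hf hef => pdisj_iff.mp (hIsM e he f hf hef)
  have hsorted : ∀ f ∈ M, f.1 < f.2 := fun f hf => sorted_S hE hij f (hM hf)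
  by_cases hMi : ∃ f ∈ M, vmem i f
  · obtain ⟨f₀, hf₀M, hf₀i⟩ := hMi
    by_cases hf₀E : f₀ ∈ E
    · refine hnu M (fun g hg => ?_) hIsM
      by_cases hgf : g = f₀
      · exact hgf ▸ hf₀E
      · exact H1 (hM hg) (hM' f₀ hf₀M g hg (fun h => hgf h.symm) i hf₀i)
    · obtain ⟨e₀, he₀E, he₀c, he₀r⟩ := H3 (hM hf₀M) hf₀E
      obtain ⟨hj₀, hi₁, hi₂, hnr⟩ := he₀c
      have P₀ := repl_vmem (hE e₀ he₀E) hij hj₀ (by unfold vmem; omega)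
      rw [he₀r] at P₀
      have hvje₀ : vmem j e₀ := hj₀
      -- coords of e₀ : j and (coords f₀ minus i)
      have cov_e₀ : ∀ v, vmem v e₀ → v = j ∨ (vmem v f₀ ∧ v ≠ i) := by
        intro v hv
        by_cases hvj : v = j
        · exact Or.inl hvj
        by_cases hvi : v = i
        · subst hvi; unfold vmem at hv; omega
        · exact Or.inr ⟨(P₀.2.2.1 v hvi hvj).mpr hv, hvi⟩
      by_cases hMj : ∃ g ∈ M, vmem j g
      · obtain ⟨g₀, hg₀M, hg₀j⟩ := hMj
        have hg₀f₀ : g₀ ≠ f₀ := fun h => P₀.2.1 (h ▸ hg₀j)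
        have hg₀i : ¬ vmem i g₀ := hM' f₀ hf₀M g₀ hg₀M (fun h => hg₀f₀ h.symm) i hf₀i
        obtain ⟨hg₀E, hcase⟩ := H2 hE hij (hM hg₀M) hg₀j
        have hrg : repl i j g₀ ∈ E := by
          rcases hcase with h | h
          · exact absurd h hg₀i
          · exact h
        have Pg := repl_vmem (hE g₀ hg₀E) hij hg₀j hg₀i
        have cov_rg : ∀ v, vmem v (repl i j g₀) → v = i ∨ (vmem v g₀ ∧ v ≠ j) := by
          intro v hv
          by_cases hvi : v = i
          · exact Or.inl hvi
          by_cases hvj : v = j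
          · exact absurd (hvj ▸ hv) Pg.2.1
          · exact Or.inr ⟨(Pg.2.2.1 v hvi hvj).mp hv, hvj⟩
        -- facts about the rest
        have resti : ∀ h ∈ M \ {f₀, g₀}, ¬ vmem i h := by
          intro h hh
          rw [Finset.mem_sdiff] at hh
          simp only [Finset.mem_insert, Finset.mem_singleton] at hh
          exact hM' f₀ hf₀M h hh.1 (fun hx => hh.2 (Or.inl hx.symm)) i hf₀i
        have restj : ∀ h ∈ M \ {f₀, g₀}, ¬ vmem j h := by
          intro h hh
          rw [Finset.mem_sdiff] at hh
          simp only [Finset.mem_insert, Finset.mem_singleton] at hh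
          exact hM' g₀ hg₀M h hh.1 (fun hx => hh.2 (Or.inr hx.symm)) j hg₀j
        have restf₀ : ∀ h ∈ M \ {f₀, g₀}, ∀ v, vmem v f₀ → ¬ vmem v h := by
          intro h hh
          rw [Finset.mem_sdiff] at hh
          simp only [Finset.mem_insert, Finset.mem_singleton] at hh
          exact hM' f₀ hf₀M h hh.1 (fun hx => hh.2 (Or.inl hx.symm))
        have restg₀ : ∀ h ∈ M \ {f₀, g₀}, ∀ v, vmem v g₀ → ¬ vmem v h := by
          intro h hh
          rw [Finset.mem_sdiff] at hh
          simp only [Finset.mem_insert, Finset.mem_singleton] at hh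
          exact hM' g₀ hg₀M h hh.1 (fun hx => hh.2 (Or.inr hx.symm))
        -- disjointness of the two new edges
        have d1 : ∀ v, vmem v e₀ → ¬ vmem v (repl i j g₀) := by
          intro v hv hv'
          rcases cov_e₀ v hv with rfl | ⟨hvf, hvi⟩
          · exact Pg.2.1 hv'
          · rcases cov_rg v hv' with rfl | ⟨hvg, hvj⟩
            · exact hvi rfl
            · exact hM' f₀ hf₀M g₀ hg₀M (fun h => hg₀f₀ h.symm) v hvf hvg
        have d2 : ∀ h ∈ M \ {f₀, g₀}, ∀ v, vmem v e₀ → ¬ vmem v h := by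
          intro h hh v hv hv'
          rcases cov_e₀ v hv with rfl | ⟨hvf, _⟩
          · exact restj h hh hv'
          · exact restf₀ h hh v hvf hv'
        have d3 : ∀ h ∈ M \ {f₀, g₀}, ∀ v, vmem v (repl i j g₀) → ¬ vmem v h := by
          intro h hh v hv hv'
          rcases cov_rg v hv with rfl | ⟨hvg, _⟩
          · exact resti h hh hv'
          · exact restg₀ h hh v hvg hv'
        set M' := insert e₀ (insert (repl i j g₀) (M \ {f₀, g₀})) with hM'def
        have hsub : M' ⊆ E := by
          intro a ha
          rw [hM'def, Finset.mem_insert, Finset.mem_insert] at ha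
          rcases ha with rfl | rfl | ha
          · exact he₀E
          · exact hrg
          · exact H1 (hM (Finset.mem_sdiff.mp ha).1) (resti a ha)
        have hIsM' : IsM M' := by
          intro a ha b hb hab
          rw [pdisj_iff]
          rw [hM'def, Finset.mem_insert, Finset.mem_insert] at ha hb
          rcases ha with rfl | rfl | ha <;> rcases hb with rfl | rfl | hb
          · exact absurd rfl hab
          · exact d1
          · exact d2 b hb
          · exact fun v hv hv' => d1 v hv' hv
          · exact absurd rfl hab
          · exact d3 b hb
          · exact fun v hv hv' => d2 a ha v hv' hv
          · exact fun v hv hv' => d3 a ha v hv' hv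
          · exact pdisj_iff.mp (hIsM a (Finset.mem_sdiff.mp ha).1 b (Finset.mem_sdiff.mp hb).1 hab)
        have hne₀ : e₀ ∉ insert (repl i j g₀) (M \ {f₀, g₀}) := by
          rw [Finset.mem_insert]
          rintro (h | h)
          · exact d1 j hvje₀ (h ▸ hvje₀)
          · exact d2 e₀ h j hvje₀ hvje₀
        have hnrg : repl i j g₀ ∉ M \ {f₀, g₀} := fun h => d3 _ h i Pg.1 Pg.1
        have hcard : M'.card = M.card := by
          rw [hM'def, Finset.card_insert_of_notMem hne₀, Finset.card_insert_of_notMem hnrg]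
          have hsub2 : ({f₀, g₀} : Finset (ℕ × ℕ)) ⊆ M := by
            intro x hx
            simp only [Finset.mem_insert, Finset.mem_singleton] at hx
            rcases hx with rfl | rfl
            · exact hf₀M
            · exact hg₀M
          rw [Finset.card_sdiff_of_subset hsub2]
          have h2 : ({f₀, g₀} : Finset (ℕ × ℕ)).card = 2 := by
            rw [Finset.card_insert_of_notMem (by simpa using fun h => hg₀f₀ h.symm),
              Finset.card_singleton]
          have := Finset.card_le_card hsub2
          omega
        calc M.card = M'.card := hcard.symm
        _ ≤ k := hnu M' hsub hIsM'
      · -- no vertex j in M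
        push_neg at hMj
        set M' := insert e₀ (M \ {f₀}) with hM'def
        have restf₀ : ∀ h ∈ M \ {f₀}, ∀ v, vmem v f₀ → ¬ vmem v h := by
          intro h hh
          rw [Finset.mem_sdiff, Finset.mem_singleton] at hh
          exact hM' f₀ hf₀M h hh.1 (fun hx => hh.2 hx.symm)
        have d2 : ∀ h ∈ M \ {f₀}, ∀ v, vmem v e₀ → ¬ vmem v h := by
          intro h hh v hv hv'
          rcases cov_e₀ v hv with rfl | ⟨hvf, _⟩
          · exact hMj h (Finset.mem_sdiff.mp hh).1 hv'
          · exact restf₀ h hh v hvf hv'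
        have hsub : M' ⊆ E := by
          intro a ha
          rw [hM'def, Finset.mem_insert] at ha
          rcases ha with rfl | ha
          · exact he₀E
          · refine H1 (hM (Finset.mem_sdiff.mp ha).1) ?_
            rw [Finset.mem_sdiff, Finset.mem_singleton] at ha
            exact hM' f₀ hf₀M a ha.1 (fun hx => ha.2 hx.symm) i hf₀i
        have hIsM' : IsM M' := by
          intro a ha b hb hab
          rw [pdisj_iff]
          rw [hM'def, Finset.mem_insert] at ha hb
          rcases ha with rfl | ha <;> rcases hb with rfl | hb
          · exact absurd rfl hab
          · exact d2 b hb
          · exact fun v hv hv' => d2 a ha v hv' hv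
          · exact pdisj_iff.mp (hIsM a (Finset.mem_sdiff.mp ha).1 b (Finset.mem_sdiff.mp hb).1 hab)
        have hne₀ : e₀ ∉ M \ {f₀} := fun h => d2 e₀ h j hvje₀ hvje₀
        have hcard : M'.card = M.card := by
          rw [hM'def, Finset.card_insert_of_notMem hne₀,
            Finset.card_sdiff_of_subset (Finset.singleton_subset_iff.mpr hf₀M)]
          have := Finset.card_le_card (Finset.singleton_subset_iff.mpr hf₀M)
          simp only [Finset.card_singleton] at *
          omega
        calc M.card = M'.card := hcard.symm
        _ ≤ k := hnu M' hsub hIsM'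
  · push_neg at hMi
    exact hnu M (fun g hg => H1 (hM hg) (hMi g hg)) hIsM


lemma choose2_succ (m : ℕ) : (m+1).choose 2 = m.choose 2 + m := by
  rw [Nat.choose_succ_succ, Nat.choose_one_right, Nat.add_comm]

lemma choose2_add (a b : ℕ) : (a+b).choose 2 = a.choose 2 + b.choose 2 + a * b := by
  induction b with
  | zero => simp
  | succ b ih =>
    have h1 : a + (b+1) = (a+b)+1 := by omega
    rw [h1, choose2_succ, ih, choose2_succ]; ring

lemma two_choose2_le (m : ℕ) : 2 * m.choose 2 ≤ m * m := by
  induction m with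
  | zero => simp
  | succ m ih => rw [choose2_succ]; nlinarith

lemma arith1 {k n : ℕ} (hk : 1 ≤ k) (hn : 2*k+2 ≤ n) :
    max ((2*(k-1)+1).choose 2) ((n-1).choose 2 - ((n-1)-(k-1)).choose 2) + (n-1)
      ≤ max ((2*k+1).choose 2) (n.choose 2 - (n-k).choose 2) := by
  obtain ⟨k', rfl⟩ : ∃ k', k = k' + 1 := ⟨k-1, by omega⟩
  obtain ⟨m, rfl⟩ : ∃ m, n = m + 1 := ⟨n-1, by omega⟩
  simp only [Nat.add_sub_cancel] at *
  have h2 : m + 1 - (k'+1) = m - k' := by omega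
  rw [h2, choose2_succ m]
  rw [← max_add_add_right]
  have hmono : (m-k').choose 2 ≤ m.choose 2 := Nat.choose_le_choose 2 (by omega)
  have hBB : (m.choose 2 - (m-k').choose 2) + m
      ≤ (m.choose 2 + m) - (m-k').choose 2 := by omega
  rcases le_or_gt (m+1) (4*(k'+1)) with hc | hc
  · have f1 : (2*(k'+1)+1).choose 2 = (2*k'+1).choose 2 + (4*k'+3) := by
      have e1 : 2*(k'+1)+1 = ((2*k'+1) + 1) + 1 := by ring
      rw [e1, choose2_succ, choose2_succ]; omega
    exact max_le (le_trans (by omega) (le_max_left _ _))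
      (le_trans hBB (le_max_right _ _))
  · have hA : (2*k'+1).choose 2 + m ≤ (m.choose 2 + m) - (m-k').choose 2 := by
      have f3 : (m+1).choose 2 = (m-k').choose 2 + (k'+1).choose 2 + (m-k') * (k'+1) := by
        have : m+1 = (m-k') + (k'+1) := by omega
        nth_rewrite 1 [this]
        rw [choose2_add]
      have f4 : (2*k'+1).choose 2 = (k'+1).choose 2 + k'.choose 2 + (k'+1) * k' := by
        have : 2*k'+1 = (k'+1) + k' := by omega
        rw [this, choose2_add]
      have f5 := two_choose2_le k'
      have f2 : (m+1).choose 2 = m.choose 2 + m := choose2_succ m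
      have key : k'.choose 2 + (k'+1) * k' + m ≤ (m-k') * (k'+1) := by
        obtain ⟨d, rfl⟩ : ∃ d, m = k' + d := ⟨m - k', by omega⟩
        have h4 : k' + d - k' = d := by omega
        rw [h4]
        have hdge : 3*k'+3 ≤ d := by omega
        nlinarith [f5]
      omega
    exact max_le (le_trans hA (le_max_right _ _))
      (le_trans hBB (le_max_right _ _))

lemma arith2 {k n : ℕ} (hn : 1 ≤ n) :
    max ((2*k+1).choose 2) ((n-1).choose 2 - ((n-1)-k).choose 2)
      ≤ max ((2*k+1).choose 2) (n.choose 2 - (n-k).choose 2) := by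
  refine max_le (le_max_left _ _) (le_trans ?_ (le_max_right _ _))
  obtain ⟨m, rfl⟩ : ∃ m, n = m + 1 := ⟨n-1, by omega⟩
  simp only [Nat.add_sub_cancel]
  rw [choose2_succ m]
  rcases le_or_gt (m+1) k with hc | hc
  · have h1 : m + 1 - k = 0 := by omega
    have h2 : m - k = 0 := by omega
    rw [h1, h2]
    simp
  · have h3 : m + 1 - k = (m - k) + 1 := by omega
    rw [h3, choose2_succ]
    omega

lemma card_le_choose2 {E : Finset (ℕ × ℕ)} {n : ℕ} (h : bnd E n) :
    E.card ≤ n.choose 2 := by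
  classical
  have := Finset.card_le_card_of_injOn (f := fun e : ℕ × ℕ => ({e.1, e.2} : Finset ℕ))
    (s := E) (t := (Finset.range n).powersetCard 2) ?_ ?_
  · simpa [Finset.card_powersetCard, Finset.card_range] using this
  · intro e he
    obtain ⟨h1, h2⟩ := h e he
    rw [Finset.mem_coe, Finset.mem_powersetCard]
    constructor
    · intro x hx
      simp only [Finset.mem_insert, Finset.mem_singleton] at hx
      rcases hx with rfl | rfl <;> simp [Finset.mem_range] <;> omega
    · rw [Finset.card_insert_of_notMem (by simp; omega), Finset.card_singleton]
  · intro e he f hf hef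
    obtain ⟨he1, _⟩ := h e he
    obtain ⟨hf1, _⟩ := h f hf
    simp only at hef
    have h1 : e.1 ∈ ({f.1, f.2} : Finset ℕ) := by rw [← hef]; simp
    have h2 : e.2 ∈ ({f.1, f.2} : Finset ℕ) := by rw [← hef]; simp
    have h3 : f.1 ∈ ({e.1, e.2} : Finset ℕ) := by rw [hef]; simp
    simp only [Finset.mem_insert, Finset.mem_singleton] at h1 h2 h3
    have : e.1 = f.1 ∧ e.2 = f.2 := by omega
    exact Prod.ext this.1 this.2


lemma exists_shift {E : Finset (ℕ × ℕ)} (hE : ∀ e ∈ E, e.1 < e.2) (h : ¬ shifted E) :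
    ∃ i j e, i < j ∧ e ∈ E ∧ canshift E i j e := by
  unfold shifted at h; push_neg at h
  obtain ⟨e, he, a, b, hab, ha, hb, hnab⟩ := h
  by_cases h2 : (a, e.2) ∈ E
  · have hbe : b < e.2 := by
      rcases eq_or_lt_of_le hb with h3 | h3
      · exact absurd (h3 ▸ h2) hnab
      · exact h3
    refine ⟨b, e.2, (a, e.2), hbe, h2, Or.inr rfl, by dsimp only; omega, by dsimp only; omega, ?_⟩
    unfold repl
    dsimp only
    rw [if_neg (by omega), if_pos hab]
    exact hnab
  · have hae : a < e.1 := by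
      rcases eq_or_lt_of_le ha with h3 | h3
      · exact absurd (by rw [h3]; exact he) h2
      · exact h3
    have hes := hE e he
    refine ⟨a, e.1, e, hae, he, Or.inl rfl, by omega, by omega, ?_⟩
    unfold repl
    rw [if_pos rfl]
    exact h2

lemma shifted_main (N : ℕ) : ∀ k n (E : Finset (ℕ × ℕ)), k + n ≤ N → bnd E n →
    shifted E → nuLe E k →
    E.card ≤ max ((2*k+1).choose 2) (n.choose 2 - (n-k).choose 2) := by
  induction N with
  | zero =>
    intro k n E hN hb _ _
    have hn : n = 0 := by omega
    subst hn
    have : E = ∅ := by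
      rw [Finset.eq_empty_iff_forall_notMem]
      intro e he
      exact absurd (hb e he).2 (by omega)
    simp [this]
  | succ N IH =>
    intro k n E hN hb hsh hnu
    rcases le_or_gt n (2*k+1) with hn | hn
    · calc E.card ≤ n.choose 2 := card_le_choose2 hb
        _ ≤ (2*k+1).choose 2 := Nat.choose_le_choose 2 hn
        _ ≤ _ := le_max_left _ _
    rcases Nat.eq_zero_or_pos k with rfl | hk
    · have : E = ∅ := by
        rw [Finset.eq_empty_iff_forall_notMem]
        intro e he
        have h1 : ({e} : Finset (ℕ × ℕ)) ⊆ E := Finset.singleton_subset_iff.mpr he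
        have h2 : IsM {e} := by
          intro a ha b hb hab
          rw [Finset.mem_singleton] at ha hb
          exact absurd (ha.trans hb.symm) hab
        have := hnu {e} h1 h2
        simp at this
      simp [this]
    by_cases h0 : (0, n-1) ∈ E
    · -- vertex 0 is adjacent to everything; delete it
      classical
      set E1 := E.filter (fun e => e.1 ≠ 0) with hE1def
      set E' := E1.image (fun e => (e.1 - 1, e.2 - 1)) with hE'def
      have hE1mem : ∀ e ∈ E1, 1 ≤ e.1 ∧ e.1 < e.2 ∧ e.2 < n := by
        intro e he
        rw [hE1def, Finset.mem_filter] at he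
        have := hb e he.1
        have := he.2
        omega
      have hE1sub : E1 ⊆ E := Finset.filter_subset _ _
      have hinj : Set.InjOn (fun e : ℕ × ℕ => (e.1 - 1, e.2 - 1)) E1 := by
        intro x hx y hy hxy
        simp only [Finset.mem_coe] at hx hy
        have h1 := hE1mem x hx
        have h2 := hE1mem y hy
        simp only [Prod.mk.injEq] at hxy
        exact Prod.ext (by omega) (by omega)
      have hcardE' : E'.card = E1.card := Finset.card_image_of_injOn hinj
      have hcard0 : (E.filter (fun e => ¬ e.1 ≠ 0)).card ≤ n - 1 := by
        refine le_trans (Finset.card_le_card_of_injOn (fun e => e.2)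
          (fun e he => ?_) (fun x hx y hy hxy => ?_)) (le_of_eq (Nat.card_Ico 1 n))
        · rw [Finset.mem_coe, Finset.mem_filter] at he
          have := hb e he.1
          rw [Finset.mem_coe, Finset.mem_Ico]
          dsimp only
          omega
        · simp only [Finset.mem_coe, Finset.mem_filter] at hx hy
          dsimp only at hxy
          have h1 : x.1 = 0 := by omega
          have h2 : y.1 = 0 := by omega
          exact Prod.ext (h1.trans h2.symm) hxy
      have hsplit : E.card = (E.filter (fun e => ¬ e.1 ≠ 0)).card + E1.card := by
        have := Finset.card_filter_add_card_filter_not (s := E)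
          (p := fun e => e.1 ≠ 0)
        rw [hE1def]
        omega
      have hbnd' : bnd E' (n-1) := by
        intro f hf
        rw [hE'def] at hf
        obtain ⟨e, he, rfl⟩ := Finset.mem_image.mp hf
        have := hE1mem e he
        dsimp only
        omega
      have hsh' : shifted E' := by
        intro f hf a b hab ha hb'
        rw [hE'def] at hf ⊢
        obtain ⟨e, he, rfl⟩ := Finset.mem_image.mp hf
        have h1 := hE1mem e he
        refine Finset.mem_image.mpr ⟨(a+1, b+1), ?_, by simp⟩
        rw [hE1def, Finset.mem_filter]
        refine ⟨hsh e (hE1sub he) (a+1) (b+1) (by omega) (by dsimp only at ha ⊢; omega)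
          (by dsimp only at hb' ⊢; omega), by omega⟩
      have hnu' : nuLe E' (k-1) := by
        intro M' hM' hIsM'
        set M := M'.image (fun e : ℕ × ℕ => (e.1 + 1, e.2 + 1)) with hMdef
        have hMcard : M.card = M'.card := Finset.card_image_of_injOn (by
          intro x _ y _ hxy
          simp only [Prod.mk.injEq] at hxy
          exact Prod.ext (by omega) (by omega))
        have hMsub : M ⊆ E := by
          intro f hf
          rw [hMdef] at hf
          obtain ⟨e, he, rfl⟩ := Finset.mem_image.mp hf
          have := hM' he
          rw [hE'def] at this
          obtain ⟨x, hx, hxe⟩ := Finset.mem_image.mp this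
          have h1 := hE1mem x hx
          have h2 : x = (e.1 + 1, e.2 + 1) := by
            rw [Prod.ext_iff] at hxe
            dsimp only at hxe
            exact Prod.ext (by omega) (by omega)
          exact h2 ▸ hE1sub hx
        have hMge1 : ∀ e ∈ M, 1 ≤ e.1 ∧ 1 ≤ e.2 := by
          intro e he
          rw [hMdef] at he
          obtain ⟨x, _, rfl⟩ := Finset.mem_image.mp he
          dsimp only
          omega
        have hIsM : IsM M := by
          intro a ha b hb' hab
          rw [hMdef] at ha hb'
          obtain ⟨x, hx, rfl⟩ := Finset.mem_image.mp ha
          obtain ⟨y, hy, rfl⟩ := Finset.mem_image.mp hb'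
          have hxy : x ≠ y := fun h => hab (by rw [h])
          have := hIsM' x hx y hy hxy
          unfold pdisj at *
          dsimp only at *
          omega
        have hMk : M.card ≤ k := hnu M hMsub hIsM
        -- find an uncovered vertex in [1, n)
        set cov := M.image Prod.fst ∪ M.image Prod.snd with hcovdef
        have hcovcard : cov.card ≤ 2 * M.card := by
          refine le_trans (Finset.card_union_le _ _) ?_
          have := Finset.card_image_le (s := M) (f := Prod.fst)
          have := Finset.card_image_le (s := M) (f := Prod.snd)
          omega
        have : ∃ v, v ∈ Finset.Ico 1 n ∧ v ∉ cov := by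
          by_contra hcon
          push_neg at hcon
          have hsub : Finset.Ico 1 n ⊆ cov := fun v hv => hcon v hv
          have := Finset.card_le_card hsub
          rw [Nat.card_Ico] at this
          omega
        obtain ⟨v, hv1, hv2⟩ := this
        rw [Finset.mem_Ico] at hv1
        have hvnot : ∀ e ∈ M, ¬ vmem v e := by
          intro e he hv
          apply hv2
          rw [hcovdef, Finset.mem_union]
          unfold vmem at hv
          rcases hv with h | h
          · exact Or.inl (Finset.mem_image.mpr ⟨e, he, h⟩)
          · exact Or.inr (Finset.mem_image.mpr ⟨e, he, h⟩)
        have h0v : (0, v) ∈ E := hsh (0, n-1) h0 0 v (by omega) (by omega) (by dsimp only; omega)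
        have h0vM : (0, v) ∉ M := fun h => by have := hMge1 _ h; dsimp only at this; omega
        have hM2sub : insert (0, v) M ⊆ E := by
          intro x hx
          rw [Finset.mem_insert] at hx
          rcases hx with rfl | hx
          · exact h0v
          · exact hMsub hx
        have hIsM2 : IsM (insert (0, v) M) := by
          intro a ha b hb' hab
          rw [Finset.mem_insert] at ha hb'
          rcases ha with rfl | ha <;> rcases hb' with rfl | hb'
          · exact absurd rfl hab
          · rw [pdisj_iff]
            intro w hw hw'
            unfold vmem at hw
            dsimp only at hw
            rcases hw with rfl | rfl
            · have := hMge1 b hb'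
              unfold vmem at hw'
              omega
            · exact hvnot b hb' hw'
          · rw [pdisj_iff]
            intro w hw hw'
            unfold vmem at hw'
            dsimp only at hw'
            rcases hw' with rfl | rfl
            · have := hMge1 a ha
              unfold vmem at hw
              omega
            · exact hvnot a ha hw
          · exact hIsM a ha b hb' hab
        have := hnu (insert (0, v) M) hM2sub hIsM2
        rw [Finset.card_insert_of_notMem h0vM] at this
        omega
      have hrec := IH (k-1) (n-1) E' (by omega) hbnd' hsh' hnu'
      calc E.card = (E.filter (fun e => ¬ e.1 ≠ 0)).card + E'.card := by rw [hsplit, hcardE']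
        _ ≤ max ((2*(k-1)+1).choose 2) ((n-1).choose 2 - ((n-1)-(k-1)).choose 2) + (n-1) := by
            omega
        _ ≤ _ := arith1 hk (by omega)
    · -- vertex n-1 is isolated
      have hb' : bnd E (n-1) := by
        intro e he
        refine ⟨(hb e he).1, ?_⟩
        have h1 := (hb e he).1
        have h2 := (hb e he).2
        by_contra hcon
        have he2 : e.2 = n - 1 := by omega
        exact h0 (hsh e he 0 (n-1) (by omega) (by omega) (by omega))
      exact le_trans (IH k (n-1) E (by omega) hb' hsh hnu) (arith2 (by omega))

lemma main_core (N : ℕ) : ∀ (E : Finset (ℕ × ℕ)) (k n : ℕ), phi E ≤ N → bnd E n →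
    nuLe E k → E.card ≤ max ((2*k+1).choose 2) (n.choose 2 - (n-k).choose 2) := by
  induction N using Nat.strong_induction_on with
  | _ N IH =>
    intro E k n hN hb hnu
    by_cases hsh : shifted E
    · exact shifted_main (k+n) k n E le_rfl hb hsh hnu
    · have hE : ∀ e ∈ E, e.1 < e.2 := fun e he => (hb e he).1
      obtain ⟨i, j, e₀, hij, he₀, hc₀⟩ := exists_shift hE hsh
      have hphi : phi (S E i j) < phi E := phi_S hE hij he₀ hc₀
      rw [← card_S hE hij]
      exact IH (phi (S E i j)) (by omega) (S E i j) k n le_rfl (bnd_S hb hij)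
        (nuLe_S hE hij hnu)

end EG



theorem stmt_8 (n k : ℕ) (G : SimpleGraph (Fin n))
    (hnu : ∀ M : G.Subgraph, M.IsMatching → M.edgeSet.ncard ≤ k) :
    G.edgeSet.ncard ≤
      max (Nat.choose (2 * k + 1) 2) (Nat.choose n 2 - Nat.choose (n - k) 2) := by
  classical
  set P : Finset (Fin n × Fin n) :=
    Finset.univ.filter (fun p => G.Adj p.1 p.2 ∧ p.1 < p.2) with hPdef
  set E : Finset (ℕ × ℕ) := P.image (fun p => ((p.1 : ℕ), (p.2 : ℕ))) with hEdef
  have hPmem : ∀ p ∈ P, G.Adj p.1 p.2 ∧ (p.1 : ℕ) < (p.2 : ℕ) := by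
    intro p hp
    rw [hPdef, Finset.mem_filter] at hp
    exact ⟨hp.2.1, hp.2.2⟩
  have hinjP : Set.InjOn (fun p : Fin n × Fin n => ((p.1 : ℕ), (p.2 : ℕ))) P := by
    intro x _ y _ hxy
    rw [Prod.ext_iff] at hxy ⊢
    dsimp only at hxy
    exact ⟨Fin.val_injective hxy.1, Fin.val_injective hxy.2⟩
  have hcardE : E.card = P.card := Finset.card_image_of_injOn hinjP
  have hbnd : EG.bnd E n := by
    intro e he
    rw [hEdef] at he
    obtain ⟨p, hp, rfl⟩ := Finset.mem_image.mp he
    exact ⟨(hPmem p hp).2, (p.2).isLt⟩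
  -- every edge of E comes from an adjacent Fin pair
  have hEadj : ∀ e ∈ E, ∃ p : Fin n × Fin n, p ∈ P ∧ (p.1 : ℕ) = e.1 ∧ (p.2 : ℕ) = e.2 := by
    intro e he
    rw [hEdef] at he
    obtain ⟨p, hp, rfl⟩ := Finset.mem_image.mp he
    exact ⟨p, hp, rfl, rfl⟩
  -- the matching-number hypothesis transfers
  have hnuE : EG.nuLe E k := by
    intro M hME hIsM
    have hMs : ∀ e ∈ M, e.1 < e.2 ∧ e.2 < n := fun e he => hbnd e (hME he)
    -- build a subgraph matching
    set Madj : Fin n → Fin n → Prop :=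
      fun v w => ((v : ℕ), (w : ℕ)) ∈ M ∨ ((w : ℕ), (v : ℕ)) ∈ M with hMadjdef
    have hadjsub : ∀ {v w}, Madj v w → G.Adj v w := by
      intro v w hvw
      rcases hvw with h | h
      · obtain ⟨p, hp, h1, h2⟩ := hEadj _ (hME h)
        have e1 : p.1 = v := Fin.val_injective h1
        have e2 : p.2 = w := Fin.val_injective h2
        rw [← e1, ← e2]
        exact (hPmem p hp).1
      · obtain ⟨p, hp, h1, h2⟩ := hEadj _ (hME h)
        have e1 : p.1 = w := Fin.val_injective h1
        have e2 : p.2 = v := Fin.val_injective h2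
        rw [← e1, ← e2]
        exact (hPmem p hp).1.symm
    set M' : G.Subgraph :=
      { verts := {v | ∃ w, Madj v w}
        Adj := Madj
        adj_sub := fun h => hadjsub h
        edge_vert := fun h => ⟨_, h⟩
        symm := ⟨fun v w h => Or.symm h⟩ } with hM'def
    have hmatch : M'.IsMatching := by
      intro v hv
      obtain ⟨w, hw⟩ := hv
      refine ⟨w, hw, ?_⟩
      intro w' hw'
      -- uniqueness
      have hvw := hw'
      have key : (w' : ℕ) = (w : ℕ) := by
        rcases hw with h1 | h1 <;> rcases hw' with h2 | h2
        · by_cases he : ((v:ℕ),(w:ℕ)) = ((v:ℕ),(w':ℕ))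
          · rw [Prod.ext_iff] at he; omega
          · have := hIsM _ h2 _ h1 (fun hh => he (by rw [hh]))
            unfold EG.pdisj at this
            dsimp only at this
            omega
        · by_cases he : ((v:ℕ),(w:ℕ)) = ((w':ℕ),(v:ℕ))
          · rw [Prod.ext_iff] at he
            dsimp only at he
            have := (hMs _ h1).1
            dsimp only at this
            omega
          · have := hIsM _ h2 _ h1 (fun hh => he (by rw [hh]))
            unfold EG.pdisj at this
            dsimp only at this
            omega
        · by_cases he : ((w:ℕ),(v:ℕ)) = ((v:ℕ),(w':ℕ))
          · rw [Prod.ext_iff] at he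
            dsimp only at he
            have := (hMs _ h1).1
            dsimp only at this
            omega
          · have := hIsM _ h2 _ h1 (fun hh => he (by rw [hh]))
            unfold EG.pdisj at this
            dsimp only at this
            omega
        · by_cases he : ((w:ℕ),(v:ℕ)) = ((w':ℕ),(v:ℕ))
          · rw [Prod.ext_iff] at he; dsimp only at he; omega
          · have := hIsM _ h2 _ h1 (fun hh => he (by rw [hh]))
            unfold EG.pdisj at this
            dsimp only at this
            omega
      exact Fin.val_injective key
    -- count the edges of M'
    set Q : Finset (Fin n × Fin n) := P.filter (fun p => ((p.1:ℕ),(p.2:ℕ)) ∈ M) with hQdef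
    have hMQ : M = Q.image (fun p => ((p.1 : ℕ), (p.2 : ℕ))) := by
      apply Finset.Subset.antisymm
      · intro e he
        obtain ⟨p, hp, h1, h2⟩ := hEadj e (hME he)
        refine Finset.mem_image.mpr ⟨p, ?_, by rw [Prod.ext_iff]; exact ⟨h1, h2⟩⟩
        rw [hQdef, Finset.mem_filter]
        refine ⟨hp, ?_⟩
        have : ((p.1:ℕ), (p.2:ℕ)) = e := by rw [Prod.ext_iff]; exact ⟨h1, h2⟩
        rw [this]; exact he
      · intro e he
        obtain ⟨p, hp, rfl⟩ := Finset.mem_image.mp he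
        rw [hQdef, Finset.mem_filter] at hp
        exact hp.2
    have hQcard : Q.card = M.card := by
      rw [hMQ]
      exact (Finset.card_image_of_injOn (hinjP.mono (by
        intro x hx
        rw [hQdef] at hx
        exact Finset.mem_coe.mpr (Finset.filter_subset _ _ (Finset.mem_coe.mp hx))))).symm
    have hedges : M'.edgeSet = ↑(Q.image (fun p => s(p.1, p.2))) := by
      ext e
      induction e using Sym2.ind with
      | _ x y =>
        rw [SimpleGraph.Subgraph.mem_edgeSet, Finset.coe_image, Set.mem_image]
        constructor
        · intro hxy
          rcases hxy with h | h
          · obtain ⟨p, hp, h1, h2⟩ := hEadj _ (hME h)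
            have e1 : p.1 = x := Fin.val_injective h1
            have e2 : p.2 = y := Fin.val_injective h2
            refine ⟨p, ?_, by rw [e1, e2]⟩
            rw [Finset.mem_coe, hQdef, Finset.mem_filter]
            refine ⟨hp, ?_⟩
            rw [h1, h2]
            exact h
          · obtain ⟨p, hp, h1, h2⟩ := hEadj _ (hME h)
            have e1 : p.1 = y := Fin.val_injective h1
            have e2 : p.2 = x := Fin.val_injective h2
            refine ⟨p, ?_, by rw [e1, e2]; exact Sym2.eq_swap⟩
            rw [Finset.mem_coe, hQdef, Finset.mem_filter]
            refine ⟨hp, ?_⟩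
            rw [h1, h2]
            exact h
        · rintro ⟨p, hp, hpe⟩
          rw [Finset.mem_coe, hQdef, Finset.mem_filter] at hp
          rw [Sym2.eq_iff] at hpe
          rcases hpe with ⟨rfl, rfl⟩ | ⟨rfl, rfl⟩
          · exact Or.inl hp.2
          · exact Or.inr hp.2
    have hinjQ : Set.InjOn (fun p : Fin n × Fin n => s(p.1, p.2)) Q := by
      intro a ha b hb hab
      rw [Finset.mem_coe, hQdef, Finset.mem_filter] at ha hb
      dsimp only at hab
      rw [Sym2.eq_iff] at hab
      have h1 := (hPmem a ha.1).2
      have h2 := (hPmem b hb.1).2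
      rcases hab with ⟨e1, e2⟩ | ⟨e1, e2⟩
      · exact Prod.ext e1 e2
      · rw [← e1, ← e2] at h2
        omega
    have hncard : M'.edgeSet.ncard = M.card := by
      rw [hedges, Set.ncard_coe_finset, Finset.card_image_of_injOn hinjQ, hQcard]
    have := hnu M' hmatch
    rw [hncard] at this
    exact this
  -- count G's edges
  have hGcard : G.edgeSet.ncard = E.card := by
    rw [hcardE]
    rw [Set.ncard_eq_toFinset_card']
    have hPcard : P.card = G.edgeSet.toFinset.card := by
      refine Finset.card_bij (fun p _ => s(p.1, p.2)) ?_ ?_ ?_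
      · intro p hp
        rw [Set.mem_toFinset, SimpleGraph.mem_edgeSet]
        exact (hPmem p hp).1
      · intro a ha b hb hab
        rw [Sym2.eq_iff] at hab
        have h1 := (hPmem a ha).2
        have h2 := (hPmem b hb).2
        rcases hab with ⟨e1, e2⟩ | ⟨e1, e2⟩
        · exact Prod.ext e1 e2
        · rw [← e1, ← e2] at h2
          omega
      · intro e he
        rw [Set.mem_toFinset] at he
        induction e using Sym2.ind with
        | _ x y =>
          rw [SimpleGraph.mem_edgeSet] at he
          rcases lt_trichotomy x y with h | h | h
          · refine ⟨(x, y), ?_, rfl⟩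
            rw [hPdef, Finset.mem_filter]
            exact ⟨Finset.mem_univ _, he, h⟩
          · exact absurd (h ▸ he) (G.loopless.irrefl y)
          · refine ⟨(y, x), ?_, Sym2.eq_swap⟩
            rw [hPdef, Finset.mem_filter]
            exact ⟨Finset.mem_univ _, he.symm, h⟩
    exact hPcard.symm
  rw [hGcard]
  exact EG.main_core (EG.phi E) E k n le_rfl hbnd hnuE
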